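/- Let A be a positive definite n×n complex matrix and define the sequence X_1 = A, X_{m+1} = ½(X_m + A X_m^{-1}). Then every X_m is positive definite, commutes with A, and X_m converges to A^{1/2}. -/

import Mathlib

open Matrix
open scoped ComplexOrder

/-! ### Scalar Newton iteration -/

/-- The scalar Newton iteration for the square root of `a`. -/
noncomputable def newtonSeq (a : ℝ) : ℕ → ℝ
  | 0 => a
  | m + 1 => (newtonSeq a m + a / newtonSeq a m) / 2

lemma newtonSeq_pos {a : ℝ} (ha : 0 < a) : ∀ m, 0 < newtonSeq a m := by
  intro m
  induction m with
  | zero => exact ha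
  | succ m ih =>
    have : 0 < newtonSeq a m + a / newtonSeq a m := by positivity
    simpa [newtonSeq] using by positivity

lemma newtonSeq_ge_sqrt {a : ℝ} (ha : 0 < a) (m : ℕ) :
    Real.sqrt a ≤ newtonSeq a (m + 1) := by
  have hx := newtonSeq_pos ha m
  set x := newtonSeq a m with hxdef
  have hq : a / x * x = a := div_mul_cancel₀ a hx.ne'
  have hs : Real.sqrt a ^ 2 = a := Real.sq_sqrt ha.le
  show Real.sqrt a ≤ (x + a / x) / 2
  nlinarith [sq_nonneg (x - Real.sqrt a), hq, hx]

lemma newtonSeq_antitone {a : ℝ} (ha : 0 < a) (m : ℕ) :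
    newtonSeq a (m + 2) ≤ newtonSeq a (m + 1) := by
  have hx := newtonSeq_pos ha (m + 1)
  have hge := newtonSeq_ge_sqrt ha m
  set x := newtonSeq a (m + 1) with hxdef
  have hx2 : a ≤ x ^ 2 := by
    calc a = Real.sqrt a ^ 2 := (Real.sq_sqrt ha.le).symm
    _ ≤ x ^ 2 := pow_le_pow_left₀ (Real.sqrt_nonneg a) hge 2
  have hq : a / x ≤ x := by
    rw [div_le_iff₀ hx]; nlinarith
  show (x + a / x) / 2 ≤ x
  linarith

lemma newtonSeq_tendsto {a : ℝ} (ha : 0 < a) :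
    Filter.Tendsto (newtonSeq a) Filter.atTop (nhds (Real.sqrt a)) := by
  have hs : 0 < Real.sqrt a := Real.sqrt_pos.mpr ha
  set g : ℕ → ℝ := fun m => newtonSeq a (m + 1) with hg
  have hanti : Antitone g := antitone_nat_of_succ_le fun m => newtonSeq_antitone ha m
  have hbdd : ∀ m, Real.sqrt a ≤ g m := fun m => newtonSeq_ge_sqrt ha m
  set L := ⨅ m, g m with hL
  have hgL : Filter.Tendsto g Filter.atTop (nhds L) :=
    tendsto_atTop_ciInf hanti ⟨Real.sqrt a, fun y ⟨m, hm⟩ => hm ▸ hbdd m⟩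
  have hLs : Real.sqrt a ≤ L := le_ciInf hbdd
  have hLpos : 0 < L := lt_of_lt_of_le hs hLs
  -- the shifted sequence also tends to L
  have h1 : Filter.Tendsto (fun m => g (m + 1)) Filter.atTop (nhds L) :=
    hgL.comp (Filter.tendsto_add_atTop_nat 1)
  have h2 : Filter.Tendsto (fun m => (g m + a / g m) / 2) Filter.atTop
      (nhds ((L + a / L) / 2)) :=
    ((hgL.add (Filter.Tendsto.div tendsto_const_nhds hgL hLpos.ne')).div_const 2)
  have heq : L = (L + a / L) / 2 := by
    refine tendsto_nhds_unique h1 ?_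
    have : (fun m => g (m + 1)) = fun m => (g m + a / g m) / 2 := by
      funext m; simp [hg, newtonSeq]
    rw [this]; exact h2
  have hL2 : L ^ 2 = a := by
    have h3 : 2 * L = L + a / L := by linarith
    have h4 : L = a / L := by linarith
    have := h4.symm
    field_simp at this
    nlinarith
  have : L = Real.sqrt a := by rw [← hL2, Real.sqrt_sq hLpos.le]
  rw [← this]
  exact (Filter.tendsto_add_atTop_iff_nat 1).mp hgL

/-! ### Matrix lemmas -/

lemma posDef_unitary_conj {n : ℕ} {U B : Matrix (Fin n) (Fin n) ℂ}
    (hU : U ∈ Matrix.unitaryGroup (Fin n) ℂ) (hB : B.PosDef) :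
    (U * B * star U).PosDef := by
  have hUU : U * star U = 1 := Matrix.mem_unitaryGroup_iff.mp hU
  rw [posDef_iff_dotProduct_mulVec]
  constructor
  · show (U * B * star U)ᴴ = U * B * star U
    rw [Matrix.star_eq_conjTranspose, conjTranspose_mul, conjTranspose_mul,
      conjTranspose_conjTranspose, hB.1.eq, mul_assoc]
  · intro x hx
    have hy : Uᴴ *ᵥ x ≠ 0 := by
      intro h
      apply hx
      have : U *ᵥ (Uᴴ *ᵥ x) = U *ᵥ 0 := by rw [h]
      rwa [mulVec_mulVec, ← Matrix.star_eq_conjTranspose, hUU, one_mulVec, mulVec_zero] at this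
    have := hB.dotProduct_mulVec_pos hy
    simpa only [Matrix.star_eq_conjTranspose, star_mulVec, dotProduct_mulVec, vecMul_vecMul,
      conjTranspose_conjTranspose, Matrix.mul_assoc] using this

/-- `Matrix.PosSemidef.sqrt` as it stood in Mathlib (Dec 2024); removed since. -/
noncomputable def Matrix.PosSemidef.sqrt {n : Type*} [Fintype n] [DecidableEq n] {𝕜 : Type*}
    [RCLike 𝕜] {A : Matrix n n 𝕜} (hA : A.PosSemidef) : Matrix n n 𝕜 :=
  hA.1.eigenvectorUnitary.1 * diagonal ((↑) ∘ (√·) ∘ hA.1.eigenvalues) *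
    (star hA.1.eigenvectorUnitary : Matrix n n 𝕜)

/-- Matrix Newton iteration for the square root of a positive definite matrix:
`X 1 = A`, `X (m+1) = ½ (X m + A * (X m)⁻¹)`.  Every iterate is positive
definite and commutes with `A`, and the sequence converges to `A^{1/2}`. -/
theorem matrix_newton_iteration_tendsto_sqrt (n : ℕ)
    (A : Matrix (Fin n) (Fin n) ℂ) (hA : A.PosDef)
    (X : ℕ → Matrix (Fin n) (Fin n) ℂ)
    (hX1 : X 1 = A)
    (hrec : ∀ m, 1 ≤ m → X (m + 1) = (2 : ℂ)⁻¹ • (X m + A * (X m)⁻¹)) :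
    (∀ m, 1 ≤ m → (X m).PosDef ∧ Commute A (X m)) ∧
      Filter.Tendsto X Filter.atTop (nhds hA.posSemidef.sqrt) := by
  classical
  set U : Matrix (Fin n) (Fin n) ℂ := (hA.1.eigenvectorUnitary : Matrix (Fin n) (Fin n) ℂ) with hUdef
  set d : Fin n → ℝ := hA.1.eigenvalues with hddef
  have hd : ∀ i, 0 < d i := hA.eigenvalues_pos
  have hUmem : U ∈ Matrix.unitaryGroup (Fin n) ℂ := hA.1.eigenvectorUnitary.2
  have hUU : U * star U = 1 := Matrix.mem_unitaryGroup_iff.mp hUmem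
  have hUU' : star U * U = 1 := Matrix.mem_unitaryGroup_iff'.mp hUmem
  have hspec : A = U * diagonal (fun i => ((d i : ℝ) : ℂ)) * star U :=
    hA.1.spectral_theorem
  -- conjugation helpers
  have conj_mul : ∀ c e : Fin n → ℂ,
      (U * diagonal c * star U) * (U * diagonal e * star U)
        = U * diagonal (fun i => c i * e i) * star U := by
    intro c e
    calc (U * diagonal c * star U) * (U * diagonal e * star U)
        = U * diagonal c * (star U * U) * diagonal e * star U := by
          simp only [Matrix.mul_assoc]
      _ = U * (diagonal c * diagonal e) * star U := by
          rw [hUU']; simp only [Matrix.mul_one, Matrix.mul_assoc]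
      _ = U * diagonal (fun i => c i * e i) * star U := by
          rw [diagonal_mul_diagonal]
  -- the key identity
  have key : ∀ m, X (m + 1) = U * diagonal (fun i => ((newtonSeq (d i) m : ℝ) : ℂ)) * star U := by
    intro m
    induction m with
    | zero => simpa [newtonSeq] using hX1.trans hspec
    | succ m ih =>
      have hpos : ∀ i, (0 : ℝ) < newtonSeq (d i) m := fun i => newtonSeq_pos (hd i) m
      have hne : ∀ i, ((newtonSeq (d i) m : ℝ) : ℂ) ≠ 0 := fun i =>
        Complex.ofReal_ne_zero.mpr (hpos i).ne'
      have hinv : (X (m + 1))⁻¹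
          = U * diagonal (fun i => ((newtonSeq (d i) m : ℝ) : ℂ)⁻¹) * star U := by
        rw [ih]
        refine inv_eq_right_inv ?_
        rw [conj_mul]
        have : (fun i => ((newtonSeq (d i) m : ℝ) : ℂ) * ((newtonSeq (d i) m : ℝ) : ℂ)⁻¹)
            = fun _ => (1 : ℂ) := by
          funext i; exact mul_inv_cancel₀ (hne i)
        rw [this, diagonal_one, Matrix.mul_one, hUU]
      rw [hrec (m + 1) (Nat.le_add_left 1 m), hinv, ih, hspec, conj_mul]
      rw [show U * diagonal (fun i => ((newtonSeq (d i) m : ℝ) : ℂ)) * star U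
            + U * diagonal (fun i => ((d i : ℝ) : ℂ) * ((newtonSeq (d i) m : ℝ) : ℂ)⁻¹) * star U
          = U * (diagonal (fun i => ((newtonSeq (d i) m : ℝ) : ℂ))
            + diagonal (fun i => ((d i : ℝ) : ℂ) * ((newtonSeq (d i) m : ℝ) : ℂ)⁻¹)) * star U by
        simp only [Matrix.add_mul, Matrix.mul_add]]
      rw [show (2 : ℂ)⁻¹ • (U * (diagonal (fun i => ((newtonSeq (d i) m : ℝ) : ℂ))
            + diagonal (fun i => ((d i : ℝ) : ℂ) * ((newtonSeq (d i) m : ℝ) : ℂ)⁻¹)) * star U)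
          = U * ((2 : ℂ)⁻¹ • (diagonal (fun i => ((newtonSeq (d i) m : ℝ) : ℂ))
            + diagonal (fun i => ((d i : ℝ) : ℂ) * ((newtonSeq (d i) m : ℝ) : ℂ)⁻¹))) * star U by
        simp only [Matrix.mul_smul, Matrix.smul_mul]]
      congr 2
      rw [diagonal_add, ← diagonal_smul]
      refine congrArg diagonal (funext fun i => ?_)
      have hxne : ((newtonSeq (d i) m : ℝ) : ℂ) ≠ 0 := hne i
      rw [show newtonSeq (d i) (m + 1)
          = (newtonSeq (d i) m + d i / newtonSeq (d i) m) / 2 from rfl]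
      simp only [Pi.smul_apply, smul_eq_mul]
      push_cast
      field_simp
  constructor
  · -- positivity and commutation
    intro m hm
    obtain ⟨k, rfl⟩ := Nat.exists_eq_add_of_le hm
    rw [Nat.add_comm 1 k, key k]
    constructor
    · refine posDef_unitary_conj hUmem ?_
      refine (Matrix.posDef_diagonal_iff).mpr fun i => ?_
      exact_mod_cast Complex.zero_lt_real.mpr (newtonSeq_pos (hd i) k)
    · show A * _ = _ * A
      rw [hspec, conj_mul, conj_mul,
        show (fun i => ((d i : ℝ) : ℂ) * ((newtonSeq (d i) k : ℝ) : ℂ))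
            = fun i => ((newtonSeq (d i) k : ℝ) : ℂ) * ((d i : ℝ) : ℂ) from
          funext fun i => mul_comm _ _]
  · -- convergence
    set L : Matrix (Fin n) (Fin n) ℂ :=
      U * diagonal (fun i => ((Real.sqrt (d i) : ℝ) : ℂ)) * star U with hLdef
    have hLsq : L ^ 2 = A := by
      rw [pow_two, hLdef, conj_mul, hspec,
        show (fun i => ((Real.sqrt (d i) : ℝ) : ℂ) * ((Real.sqrt (d i) : ℝ) : ℂ))
            = fun i => ((d i : ℝ) : ℂ) from
          funext fun i => by rw [← Complex.ofReal_mul, Real.mul_self_sqrt (hd i).le]]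
    have hLpsd : L.PosSemidef := by
      have hdiagpsd : PosSemidef (diagonal fun i => ((Real.sqrt (d i) : ℝ) : ℂ)) := by
        refine (posSemidef_diagonal_iff).mpr fun i => ?_
        exact_mod_cast Complex.zero_le_real.mpr (Real.sqrt_nonneg (d i))
      have := hdiagpsd.mul_mul_conjTranspose_same U
      simpa [Matrix.star_eq_conjTranspose, hLdef] using this
    have hLeq : L = hA.posSemidef.sqrt := rfl
    rw [← hLeq]
    rw [← Filter.tendsto_add_atTop_iff_nat 1]
    have hfun : (fun m => X (m + 1))
        = (fun c : Fin n → ℂ => U * diagonal c * star U)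
          ∘ (fun m i => ((newtonSeq (d i) m : ℝ) : ℂ)) := by
      funext m; exact key m
    rw [hfun]
    have hcont : Continuous (fun c : Fin n → ℂ => U * diagonal c * star U) :=
      (continuous_const.matrix_mul continuous_id.matrix_diagonal).matrix_mul continuous_const
    have hc : Filter.Tendsto (fun m i => ((newtonSeq (d i) m : ℝ) : ℂ)) Filter.atTop
        (nhds fun i => ((Real.sqrt (d i) : ℝ) : ℂ)) := by
      rw [tendsto_pi_nhds]
      intro i
      exact (Complex.continuous_ofReal.tendsto _).comp (newtonSeq_tendsto (hd i))
    exact (hcont.tendsto _).comp hc
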